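/- If c₁,…,c_m > 0 satisfy c₁+…+c_m = n and u₁,…,u_m ∈ S^{n-1} satisfy Σᵢ cᵢ uᵢ⊗uᵢ = Id_n, then the body K = {x ∈ ℝⁿ : maxᵢ cᵢ⟨x,uᵢ⟩² ≤ 1} satisfies vol_n(K) ≤ ∏ᵢ (2/√cᵢ)^{cᵢ}, and hence vol_n(K)^{1/n} ≤ 2√(m/n), assuming the geometric Brascamp–Lieb inequality. -/

import Mathlib

open MeasureTheory
open scoped ENNReal

/-- if `c₁+…+c_m = n`, `cᵢ > 0`, and unit vectors `uᵢ` satisfy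
`Σ cᵢ uᵢ⊗uᵢ = Id`, then `K = {x : maxᵢ cᵢ⟨x,uᵢ⟩² ≤ 1}` satisfies
`vol_n(K) ≤ ∏ᵢ (2/√cᵢ)^{cᵢ}` and hence `vol_n(K)^{1/n} ≤ 2√(m/n)`, assuming the
geometric Brascamp–Lieb inequality. -/
theorem stmt17 (n m : ℕ) (hn : 0 < n) (hnm : n ≤ m)
    (c : Fin m → ℝ) (hc : ∀ i, 0 < c i) (hsum : ∑ i, c i = n)
    (u : Fin m → EuclideanSpace ℝ (Fin n)) (hu : ∀ i, ‖u i‖ = 1)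
    (hid : ∀ x : EuclideanSpace ℝ (Fin n),
      ∑ i, c i • ((inner ℝ (u i) x : ℝ) • u i) = x)
    (hBL : ∀ f : Fin m → (ℝ → ℝ≥0∞), (∀ i, Measurable (f i)) →
      ∫⁻ x : EuclideanSpace ℝ (Fin n), ∏ i, (f i (inner ℝ x (u i) : ℝ)) ^ (c i)
        ≤ ∏ i, (∫⁻ t : ℝ, f i t) ^ (c i))
    (K : Set (EuclideanSpace ℝ (Fin n)))
    (hK : K = {x : EuclideanSpace ℝ (Fin n) | ∀ i, c i * (inner ℝ x (u i) : ℝ) ^ 2 ≤ 1}) :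
    (volume K).toReal ≤ ∏ i, (2 / Real.sqrt (c i)) ^ (c i)
    ∧ (volume K).toReal ^ ((1 : ℝ) / n) ≤ 2 * Real.sqrt ((m : ℝ) / n) := by
  have hn' : (0 : ℝ) < n := by exact_mod_cast hn
  have hsq : ∀ i, 0 < Real.sqrt (c i) := fun i => Real.sqrt_pos.mpr (hc i)
  have h4nn : ∀ i, (0 : ℝ) ≤ 4 / c i := fun i => div_nonneg (by norm_num) (hc i).le
  -- the sets
  set s : Fin m → Set ℝ :=
    fun i => Set.Icc (-(1 / Real.sqrt (c i))) (1 / Real.sqrt (c i)) with hs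
  have hset : ∀ i (t : ℝ), t ∈ s i ↔ c i * t ^ 2 ≤ 1 := by
    intro i t
    have h2 : Real.sqrt (c i) ^ 2 = c i := Real.sq_sqrt (hc i).le
    have hts : (t * Real.sqrt (c i)) ^ 2 = c i * t ^ 2 := by
      rw [mul_pow, h2]; ring
    have hiff : ∀ a : ℝ, a ≤ 1 / Real.sqrt (c i) ↔ a * Real.sqrt (c i) ≤ 1 :=
      fun a => le_div_iff₀ (hsq i)
    constructor
    · rintro ⟨ha, hb⟩
      rw [neg_le] at ha
      rw [hiff] at ha hb
      nlinarith
    · intro h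
      have hst : t * Real.sqrt (c i) ≤ 1 := by
        nlinarith [sq_nonneg (t * Real.sqrt (c i) - 1)]
      have hst2 : -t * Real.sqrt (c i) ≤ 1 := by
        nlinarith [sq_nonneg (t * Real.sqrt (c i) + 1)]
      exact ⟨neg_le.mp ((hiff (-t)).mpr hst2), (hiff t).mpr hst⟩
  -- the functions
  set f : Fin m → ℝ → ℝ≥0∞ := fun i => (s i).indicator 1 with hf
  have hmeas : ∀ i, Measurable (f i) := fun i =>
    measurable_one.indicator measurableSet_Icc
  have hK_meas : MeasurableSet K := by
    rw [hK]
    have : {x : EuclideanSpace ℝ (Fin n) | ∀ i, c i * (inner ℝ x (u i) : ℝ) ^ 2 ≤ 1}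
        = ⋂ i, {x : EuclideanSpace ℝ (Fin n) | c i * (inner ℝ x (u i) : ℝ) ^ 2 ≤ 1} := by
      ext x; simp
    rw [this]
    refine MeasurableSet.iInter fun i => ?_
    have hcont : Continuous fun x : EuclideanSpace ℝ (Fin n) =>
        c i * (inner ℝ x (u i) : ℝ) ^ 2 := by
      have : Continuous fun x : EuclideanSpace ℝ (Fin n) => (inner ℝ x (u i) : ℝ) :=
        continuous_id.inner continuous_const
      exact continuous_const.mul (this.pow 2)
    exact (isClosed_le hcont continuous_const).measurableSet
  have key : ∀ x : EuclideanSpace ℝ (Fin n),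
      ∏ i, (f i (inner ℝ x (u i) : ℝ)) ^ (c i)
        = K.indicator 1 x := by
    intro x
    by_cases hx : x ∈ K
    · rw [Set.indicator_of_mem hx]
      refine Finset.prod_eq_one fun i _ => ?_
      have hmem : (inner ℝ x (u i) : ℝ) ∈ s i :=
        (hset i _).mpr (by rw [hK] at hx; exact hx i)
      simp only [hf]
      rw [Set.indicator_of_mem hmem, Pi.one_apply, ENNReal.one_rpow]
    · rw [Set.indicator_of_notMem hx]
      rw [hK] at hx
      simp only [Set.mem_setOf_eq, not_forall, not_le] at hx
      obtain ⟨i, hi⟩ := hx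
      refine Finset.prod_eq_zero (Finset.mem_univ i) ?_
      have hmem : (inner ℝ x (u i) : ℝ) ∉ s i := by
        rw [hset]; exact not_le.mpr hi
      simp only [hf]
      rw [Set.indicator_of_notMem hmem]
      exact ENNReal.zero_rpow_of_pos (hc i)
  have hint : ∀ i, ∫⁻ t : ℝ, f i t = ENNReal.ofReal (2 / Real.sqrt (c i)) := by
    intro i
    simp only [hf]
    rw [lintegral_indicator_one measurableSet_Icc, Real.volume_Icc]
    congr 1
    field_simp
    ring
  have main : volume K ≤ ∏ i, (ENNReal.ofReal (2 / Real.sqrt (c i))) ^ (c i) := by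
    have h := hBL f hmeas
    simp_rw [key] at h
    rw [lintegral_indicator_one hK_meas] at h
    refine h.trans_eq (Finset.prod_congr rfl fun i _ => by rw [hint i])
  have hposb : ∀ i, (0 : ℝ) ≤ 2 / Real.sqrt (c i) := fun i => by positivity
  have main' : volume K ≤ ENNReal.ofReal (∏ i, (2 / Real.sqrt (c i)) ^ (c i)) := by
    refine main.trans_eq ?_
    rw [Finset.prod_congr rfl fun i _ =>
      ENNReal.ofReal_rpow_of_nonneg (hposb i) (hc i).le]
    exact (ENNReal.ofReal_prod_of_nonneg
      (fun i _ => Real.rpow_nonneg (hposb i) _)).symm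
  have part1 : (volume K).toReal ≤ ∏ i, (2 / Real.sqrt (c i)) ^ (c i) :=
    ENNReal.toReal_le_of_le_ofReal
      (Finset.prod_nonneg fun i _ => Real.rpow_nonneg (hposb i) _) main'
  refine ⟨part1, ?_⟩
  -- AM-GM part
  set B : ℝ := 2 * Real.sqrt ((m : ℝ) / n) with hB
  have hB0 : 0 ≤ B := by positivity
  have hamgm : ∏ i, (4 / c i) ^ (c i / n) ≤ ∑ i, (c i / n) * (4 / c i) :=
    Real.geom_mean_le_arith_mean_weighted Finset.univ (fun i => c i / n)
      (fun i => 4 / c i) (fun i _ => div_nonneg (hc i).le hn'.le)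
      (by rw [← Finset.sum_div, hsum, div_self hn'.ne']) (fun i _ => h4nn i)
  have hsumval : ∑ i, (c i / n) * (4 / c i) = 4 * m / n := by
    have heach : ∀ i, (c i / n) * (4 / c i) = 4 / n := fun i => by
      field_simp [(hc i).ne', hn'.ne']
    rw [Finset.sum_congr rfl fun i _ => heach i, Finset.sum_const,
      Finset.card_univ, Fintype.card_fin, nsmul_eq_mul]
    ring
  have hfac : ∀ i, ((4 / c i) ^ (c i / (n : ℝ))) ^ ((n : ℝ) / 2)
      = (2 / Real.sqrt (c i)) ^ (c i) := by
    intro i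
    have h4 : (4 : ℝ) / c i = (2 / Real.sqrt (c i)) ^ (2 : ℝ) := by
      rw [Real.rpow_two, div_pow, Real.sq_sqrt (hc i).le]
      norm_num
    rw [← Real.rpow_mul (h4nn i)]
    have he : c i / (n : ℝ) * ((n : ℝ) / 2) = c i / 2 := by
      field_simp
    rw [he, h4, ← Real.rpow_mul (hposb i)]
    congr 1
    ring
  have hprod_eq : ∏ i, (2 / Real.sqrt (c i)) ^ (c i)
      = (∏ i, (4 / c i) ^ (c i / (n : ℝ))) ^ ((n : ℝ) / 2) := by
    rw [← Real.finset_prod_rpow _ _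
      (fun i _ => Real.rpow_nonneg (h4nn i) _)]
    exact Finset.prod_congr rfl fun i _ => (hfac i).symm
  have hBn : ((4 : ℝ) * m / n) ^ ((n : ℝ) / 2) = B ^ (n : ℝ) := by
    have h4 : (4 : ℝ) * m / n = B ^ (2 : ℝ) := by
      rw [hB, Real.rpow_two, mul_pow,
        Real.sq_sqrt (div_nonneg (Nat.cast_nonneg m) hn'.le)]
      ring
    rw [h4, ← Real.rpow_mul hB0]
    congr 1
    ring
  have hAMGM : ∏ i, (2 / Real.sqrt (c i)) ^ (c i) ≤ B ^ (n : ℝ) := by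
    rw [hprod_eq, ← hBn]
    exact Real.rpow_le_rpow
      (Finset.prod_nonneg fun i _ => Real.rpow_nonneg (h4nn i) _)
      (hamgm.trans_eq hsumval) (by positivity)
  have hA0 : (0 : ℝ) ≤ (volume K).toReal := ENNReal.toReal_nonneg
  calc (volume K).toReal ^ ((1 : ℝ) / n)
      ≤ (B ^ (n : ℝ)) ^ ((1 : ℝ) / n) :=
        Real.rpow_le_rpow hA0 (part1.trans hAMGM) (by positivity)
    _ = B := by
        rw [← Real.rpow_mul hB0, mul_one_div, div_self hn'.ne', Real.rpow_one]
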